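/- Let k ≥ 2, ζ > 0, π_min > 0, ε > 0 with ε < min{π_min/(4√k), ζ}. Let (π, m) be a model with π ∈ Δ^{k-1}, min_j π_j ≥ π_min, m ∈ [0,1]^{n×k} with all rows ζ-separated, and suppose σ = σ_k(H(m)) < 1/2. Then there exists a probability vector π̂ with min_j π̂_j ≥ π_min/4 such that min over permutations ρ of max{max_j |π_j - π̂_{ρ(j)}|, max_{i,j}|m_{ij} - m_{i,ρ(j)}|} > ε, yet ‖H(m)π - H(m)π̂‖_∞ ≤ 4kσ·ε. -/

import Mathlib

open Matrix Finset

/-- Euclidean norm of a finitely-indexed real vector. -/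
noncomputable def e2 {n : Type*} [Fintype n] (x : n → ℝ) : ℝ :=
  Real.sqrt (∑ i, x i ^ 2)

/-- The `j`-th largest singular value of a real matrix, via the Courant–Fischer
max–min characterization: the supremum over `j`-dimensional subspaces of the
infimum of `‖A x‖₂` over unit vectors `x` in the subspace. -/
noncomputable def sval {m' n : Type*} [Fintype m'] [Fintype n] (A : Matrix m' n ℝ) (j : ℕ) : ℝ :=
  ⨆ V : {V : Submodule ℝ (n → ℝ) // Module.finrank ℝ V = j},
    ⨅ x : {x : n → ℝ // x ∈ V.1 ∧ e2 x = 1}, e2 (A.mulVec x.1)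

/-- Hadamard extension: rows indexed by subsets `S ⊆ [n]`, entry `(S, j)` equal
to `∏ i ∈ S, m i j`. -/
noncomputable def hadamardExt {n k : ℕ} (m : Matrix (Fin n) (Fin k) ℝ) :
    Matrix (Finset (Fin n)) (Fin k) ℝ :=
  Matrix.of fun S j => ∏ i ∈ S, m i j

/-- The `L₂ → L₂` operator norm of a real matrix. -/
noncomputable def opN {m' n : Type*} [Fintype m'] [Fintype n] (A : Matrix m' n ℝ) : ℝ :=
  ⨆ x : {x : n → ℝ // e2 x = 1}, e2 (A.mulVec x.1)


lemma e2_eq_norm {ι : Type*} [Fintype ι] (x : ι → ℝ) :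
    e2 x = ‖(WithLp.equiv 2 (ι → ℝ)).symm x‖ := by
  rw [EuclideanSpace.norm_eq]
  simp [e2, sq_abs]

lemma e2_nonneg {ι : Type*} [Fintype ι] (x : ι → ℝ) : 0 ≤ e2 x := Real.sqrt_nonneg _

lemma e2_add_le {ι : Type*} [Fintype ι] (x y : ι → ℝ) : e2 (x + y) ≤ e2 x + e2 y := by
  simp only [e2_eq_norm]
  exact norm_add_le _ _

lemma e2_smul {ι : Type*} [Fintype ι] (c : ℝ) (x : ι → ℝ) : e2 (c • x) = |c| * e2 x := by
  simp only [e2_eq_norm]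
  rw [show (WithLp.equiv 2 (ι → ℝ)).symm (c • x) = c • (WithLp.equiv 2 (ι → ℝ)).symm x from rfl,
    norm_smul]
  simp

lemma abs_le_e2 {ι : Type*} [Fintype ι] (x : ι → ℝ) (i : ι) : |x i| ≤ e2 x := by
  rw [← Real.sqrt_sq_eq_abs]
  exact Real.sqrt_le_sqrt (Finset.single_le_sum (fun j _ => sq_nonneg (x j)) (mem_univ i))

lemma e2_continuous {ι : Type*} [Fintype ι] : Continuous (e2 : (ι → ℝ) → ℝ) := by
  unfold e2
  exact Real.continuous_sqrt.comp (continuous_finset_sum _ fun i _ => (continuous_apply i).pow 2)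

lemma e2_single {k : Type*} [Fintype k] [DecidableEq k] (j0 : k) :
    e2 (Pi.single j0 (1:ℝ) : k → ℝ) = 1 := by
  have h : ∑ i, (Pi.single j0 (1:ℝ) : k → ℝ) i ^ 2 = 1 := by
    simp [Pi.single_apply]
  rw [e2, h, Real.sqrt_one]

lemma sval_full {m' : Type*} [Fintype m'] (k : ℕ) (A : Matrix m' (Fin k) ℝ) :
    sval A k = ⨅ x : {x : Fin k → ℝ // x ∈ (⊤ : Submodule ℝ (Fin k → ℝ)) ∧ e2 x = 1},
      e2 (A.mulVec x.1) := by
  have hdim : Module.finrank ℝ (Fin k → ℝ) = k := by simp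
  have hVtop : ∀ V : {V : Submodule ℝ (Fin k → ℝ) // Module.finrank ℝ V = k}, V.1 = ⊤ := by
    intro V
    exact Submodule.eq_top_of_finrank_eq (by rw [V.2, hdim])
  haveI : Nonempty {V : Submodule ℝ (Fin k → ℝ) // Module.finrank ℝ V = k} :=
    ⟨⟨⊤, by rw [finrank_top, hdim]⟩⟩
  unfold sval
  have h : (fun V : {V : Submodule ℝ (Fin k → ℝ) // Module.finrank ℝ V = k} =>
      ⨅ x : {x : Fin k → ℝ // x ∈ V.1 ∧ e2 x = 1}, e2 (A.mulVec x.1)) =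
      fun _ => ⨅ x : {x : Fin k → ℝ // x ∈ (⊤ : Submodule ℝ (Fin k → ℝ)) ∧ e2 x = 1},
        e2 (A.mulVec x.1) := by
    funext V; rw [hVtop V]
  rw [h, ciSup_const]

set_option maxHeartbeats 1600000 in
/-- if σ = σ_k(H(m)) < 1/2, there is another mixing-weight vector
π' with entries ≥ π_min/4 such that the model distance (min over label
permutations of the max entrywise deviation) exceeds ε while the statistics
H(m)π and H(m)π' differ entrywise by at most 4kσε. -/
theorem stmt16 (n k : ℕ) (hn : 1 ≤ n) (hk : 1 ≤ k) (ζ πmin ε : ℝ)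
    (hζ : 0 < ζ) (hπ : 0 < πmin) (hε : 0 < ε)
    (hε1 : ε < πmin / (4 * Real.sqrt k)) (hε2 : ε < ζ)
    (π : Fin k → ℝ) (hπ0 : ∀ j, πmin ≤ π j) (hπ1 : ∑ j, π j = 1)
    (m : Matrix (Fin n) (Fin k) ℝ) (hm : ∀ i j, m i j ∈ Set.Icc (0 : ℝ) 1)
    (hsep : ∀ i, ∀ j j' : Fin k, j ≠ j' → ζ ≤ |m i j - m i j'|)
    (hσ : sval (hadamardExt m) k < 1 / 2) :
    ∃ π' : Fin k → ℝ, (∑ j, π' j = 1) ∧ (∀ j, πmin / 4 ≤ π' j) ∧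
      (∀ ρ : Equiv.Perm (Fin k),
        (∃ j, ε < |π j - π' (ρ j)|) ∨ (∃ i j, ε < |m i j - m i (ρ j)|)) ∧
      (∀ S : Finset (Fin n),
        |(hadamardExt m).mulVec π S - (hadamardExt m).mulVec π' S|
          ≤ 4 * k * sval (hadamardExt m) k * ε) := by
  classical
  set A := hadamardExt m with hAdef
  set sg := sval (hadamardExt m) k with hsgdef
  have hk0 : (0:ℝ) < k := by exact_mod_cast hk
  have hsk : 0 < Real.sqrt k := Real.sqrt_pos.mpr hk0
  have hsk1 : (1:ℝ) ≤ Real.sqrt k := by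
    rw [show (1:ℝ) = Real.sqrt 1 by simp]
    exact Real.sqrt_le_sqrt (by exact_mod_cast hk)
  have hsk2 : Real.sqrt k ^ 2 = (k:ℝ) := Real.sq_sqrt (le_of_lt hk0)
  have hskk : Real.sqrt k ≤ (k:ℝ) := by nlinarith
  set j0 : Fin k := ⟨0, hk⟩ with hj0
  set Sph : Set (Fin k → ℝ) := {x | e2 x = 1} with hSph
  have hx0 : (Pi.single j0 (1:ℝ) : Fin k → ℝ) ∈ Sph := e2_single j0
  have hcl : IsClosed Sph := isClosed_eq e2_continuous continuous_const
  have hbd : Bornology.IsBounded Sph := by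
    refine (Metric.isBounded_closedBall (x := (0 : Fin k → ℝ)) (r := 1)).subset ?_
    intro x hx
    rw [Metric.mem_closedBall, dist_zero_right]
    refine (pi_norm_le_iff_of_nonneg (by norm_num)).mpr fun i => ?_
    calc ‖x i‖ = |x i| := rfl
      _ ≤ e2 x := abs_le_e2 x i
      _ = 1 := hx
  have hcomp : IsCompact Sph := Metric.isCompact_of_isClosed_isBounded hcl hbd
  have hcontm : Continuous fun x : Fin k → ℝ => e2 (A.mulVec x) := by
    refine e2_continuous.comp ?_
    refine continuous_pi fun S => ?_
    simp only [Matrix.mulVec, dotProduct]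
    exact continuous_finset_sum _ fun j _ => continuous_const.mul (continuous_apply j)
  obtain ⟨α, hαmem, hαmin⟩ := hcomp.exists_isMinOn ⟨_, hx0⟩ hcontm.continuousOn
  have hα1 : e2 α = 1 := hαmem
  haveI hNE : Nonempty {x : Fin k → ℝ // x ∈ (⊤ : Submodule ℝ (Fin k → ℝ)) ∧ e2 x = 1} :=
    ⟨⟨_, Submodule.mem_top, hx0⟩⟩
  have hAα : e2 (A.mulVec α) ≤ sg := by
    rw [hsgdef, sval_full]
    exact le_ciInf fun x => isMinOn_iff.mp hαmin x.1 x.2.2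
  have hsg0 : 0 ≤ sg := by
    rw [hsgdef, sval_full]
    exact Real.iInf_nonneg fun x => e2_nonneg _
  set s : ℝ := ∑ j, α j with hs
  have hsAα : (A.mulVec α) ∅ = s := by
    rw [hs]
    simp [hAdef, hadamardExt, Matrix.mulVec, dotProduct]
  have hsσ : |s| ≤ sg := by
    calc |s| = |(A.mulVec α) ∅| := by rw [hsAα]
      _ ≤ e2 (A.mulVec α) := abs_le_e2 _ _
      _ ≤ sg := hAα
  have hshalf : |s| < 1/2 := lt_of_le_of_lt hsσ hσ
  set c : ℝ := 2 * Real.sqrt k * ε with hc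
  have hc0 : 0 < c := by positivity
  set y : Fin k → ℝ := Pi.single j0 1 with hy
  set β : Fin k → ℝ := α - s • y with hβ
  have hβj : ∀ j, β j = α j - s * y j := fun j => rfl
  have hyj : ∀ j, |y j| ≤ 1 := by
    intro j
    rw [hy, Pi.single_apply]
    split <;> norm_num
  have hαj : ∀ j, |α j| ≤ 1 := fun j => hα1 ▸ abs_le_e2 α j
  have htri : ∀ a b : ℝ, |a - b| ≤ |a| + |b| := by
    intro a b
    calc |a - b| = |a + -b| := by ring_nf
      _ ≤ |a| + |-b| := abs_add_le _ _
      _ = |a| + |b| := by rw [abs_neg]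
  have hβjb : ∀ j, |β j| ≤ 3/2 := by
    intro j
    rw [hβj]
    calc |α j - s * y j| ≤ |α j| + |s * y j| := htri _ _
      _ = |α j| + |s| * |y j| := by rw [abs_mul]
      _ ≤ 1 + (1/2) * 1 := by
          refine add_le_add (hαj j) ?_
          exact mul_le_mul hshalf.le (hyj j) (abs_nonneg _) (by norm_num)
      _ = 3/2 := by norm_num
  have hsumy : ∑ j, y j = 1 := by
    rw [hy]; simp [Pi.single_apply]
  have hsumβ : ∑ j, β j = 0 := by
    simp only [hβj]
    rw [Finset.sum_sub_distrib, ← Finset.mul_sum, hsumy, ← hs]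
    ring
  have h4 : 4 * (Real.sqrt k * ε) < πmin := by
    rw [lt_div_iff₀ (by positivity)] at hε1
    nlinarith
  set π' : Fin k → ℝ := fun j => π j + c * β j with hπ'
  have hπ'j : ∀ j, π' j = π j + c * β j := fun j => rfl
  refine ⟨π', ?_, ?_, ?_, ?_⟩
  · simp only [hπ'j]
    rw [Finset.sum_add_distrib, hπ1, ← Finset.mul_sum, hsumβ]
    ring
  · intro j
    have h1 : |c * β j| ≤ c * (3/2) := by
      rw [abs_mul, abs_of_pos hc0]
      exact mul_le_mul_of_nonneg_left (hβjb j) hc0.le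
    have h2 := neg_abs_le (c * β j)
    have h3 := hπ0 j
    rw [hπ'j]
    nlinarith
  · intro ρ
    by_cases hρ : ∀ j, ρ j = j
    · left
      by_contra hcon
      push_neg at hcon
      have hball : ∀ j, |β j| ≤ 1/(2*Real.sqrt k) := by
        intro j
        have h := hcon j
        rw [hρ j, hπ'j] at h
        have habs : |π j - (π j + c * β j)| = c * |β j| := by
          rw [show π j - (π j + c * β j) = -(c * β j) by ring, abs_neg, abs_mul, abs_of_pos hc0]
        rw [habs, hc] at h
        rw [le_div_iff₀ (by positivity)]
        have h' : ε * (2 * Real.sqrt k * |β j|) ≤ ε * 1 := by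
          rw [mul_one]
          calc ε * (2 * Real.sqrt k * |β j|) = 2 * Real.sqrt k * ε * |β j| := by ring
            _ ≤ ε := h
        have h'' := le_of_mul_le_mul_left h' hε
        nlinarith
      have hsum : ∑ j, β j ^ 2 ≤ 1/4 := by
        have hterm : ∀ j ∈ Finset.univ, β j ^ 2 ≤ 1/(4*(k:ℝ)) := by
          intro j _
          have h2 : β j ^ 2 ≤ (1/(2*Real.sqrt k))^2 := by
            rw [← sq_abs]
            exact pow_le_pow_left₀ (abs_nonneg _) (hball j) 2
          calc β j ^ 2 ≤ (1/(2*Real.sqrt k))^2 := h2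
            _ = 1/(4*(k:ℝ)) := by rw [div_pow, mul_pow, hsk2]; norm_num
        calc ∑ j, β j ^ 2 ≤ ∑ _j : Fin k, 1/(4*(k:ℝ)) := Finset.sum_le_sum hterm
          _ = k * (1/(4*(k:ℝ))) := by rw [Finset.sum_const, Finset.card_univ]; simp [nsmul_eq_mul]
          _ = 1/4 := by field_simp
      have hβe2 : e2 β ≤ 1/2 := by
        rw [e2]
        calc Real.sqrt (∑ j, β j ^ 2) ≤ Real.sqrt (1/4) := Real.sqrt_le_sqrt hsum
          _ = 1/2 := by
            rw [show (1:ℝ)/4 = (1/2)^2 by norm_num, Real.sqrt_sq (by norm_num)]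
      have hcontr : e2 α ≤ e2 β + |s| := by
        calc e2 α = e2 (β + s • y) := by rw [hβ, sub_add_cancel]
          _ ≤ e2 β + e2 (s • y) := e2_add_le _ _
          _ = e2 β + |s| := by rw [e2_smul, hy, e2_single, mul_one]
      rw [hα1] at hcontr
      linarith
    · right
      push_neg at hρ
      obtain ⟨j, hj⟩ := hρ
      exact ⟨⟨0, hn⟩, j, lt_of_lt_of_le hε2 (hsep _ j (ρ j) (Ne.symm hj))⟩
  · intro S
    have hπ'vec : π' = π + c • β := by
      funext j; rw [hπ'j]; simp
    have hmv : A.mulVec π' = A.mulVec π + c • A.mulVec β := by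
      rw [hπ'vec, Matrix.mulVec_add, Matrix.mulVec_smul]
    have hβvec : A.mulVec β = A.mulVec α - s • A.mulVec y := by
      rw [hβ, Matrix.mulVec_sub, Matrix.mulVec_smul]
    have hyv : A.mulVec y S = A S j0 := by
      rw [hy]; simp [Matrix.mulVec_single]
    have hA0 : 0 ≤ A S j0 := by
      rw [hAdef]
      exact Finset.prod_nonneg fun i _ => (hm i j0).1
    have hA1 : A S j0 ≤ 1 := by
      rw [hAdef]
      exact Finset.prod_le_one (fun i _ => (hm i j0).1) (fun i _ => (hm i j0).2)
    have hβS : |A.mulVec β S| ≤ 2 * sg := by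
      rw [hβvec]
      have : (A.mulVec α - s • A.mulVec y) S = A.mulVec α S - s * A.mulVec y S := rfl
      rw [this, hyv]
      calc |A.mulVec α S - s * A S j0| ≤ |A.mulVec α S| + |s * A S j0| := htri _ _
        _ ≤ sg + sg * 1 := by
            refine add_le_add ((abs_le_e2 _ _).trans hAα) ?_
            rw [abs_mul, abs_of_nonneg hA0]
            exact mul_le_mul hsσ hA1 hA0 hsg0
        _ = 2 * sg := by ring
    have hdiff : |A.mulVec π S - A.mulVec π' S| = c * |A.mulVec β S| := by
      rw [hmv]
      have : A.mulVec π S - (A.mulVec π + c • A.mulVec β) S = -(c * A.mulVec β S) := by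
        simp only [Pi.add_apply, Pi.smul_apply, smul_eq_mul]
        ring
      rw [this, abs_neg, abs_mul, abs_of_pos hc0]
    rw [hdiff]
    have h1 : c * |A.mulVec β S| ≤ c * (2 * sg) :=
      mul_le_mul_of_nonneg_left hβS hc0.le
    have h2 : Real.sqrt k * (sg * ε) ≤ k * (sg * ε) :=
      mul_le_mul_of_nonneg_right hskk (by positivity)
    nlinarith [abs_nonneg (A.mulVec β S)]
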